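/- Let n ≥ 1, let s : ℝ → ℝ be continuously differentiable with s(0) = 0 and s(a) > 0 for all a ≠ 0, and let m : ℝ^n → ℝ^n be continuously differentiable with m_i(x) > 0 for all x ∈ ℝ^n and all i < n. Define w : ℝ^n → ℝ^n by w_i(x) = s(y_i − y_{i+1}) · m_i(x) for i < n and w_n(x) = m_n(x), where y is the sorted version of x, and define f : ℝ^n → ℝ^n by f(x)_{σ(i)} = Σ_{j=i}^{n} w_j(x) for any permutation σ sorting x. Then f is B-differentiable on ℝ^n: f is locally Lipschitz continuous, and for every x ∈ ℝ^n and every direction d ∈ ℝ^n the one-sided directional derivative exists, i.e., the limit of (f(x + t·d) − f(x))/t as t → 0⁺ exists in ℝ^n. -/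

import Mathlib

open Filter Topology

/-- `σ` is a permutation sorting `x` in nonincreasing order. -/
def SortsPerm (n : ℕ) (σ : Equiv.Perm (Fin n)) (x : Fin n → ℝ) : Prop :=
  Antitone (x ∘ σ)

/-- The sorted (nonincreasing) version of `x`. -/
noncomputable def sortedDesc (n : ℕ) (x : Fin n → ℝ) : Fin n → ℝ :=
  fun i => x (Tuple.sort (fun j => -x j) i)

/-- `w_i(x) = s(y_i - y_{i+1}) * m_i(x)` for `i < n` and `w_n(x) = m_n(x)`,
where `y` is the sorted version of `x`. -/
noncomputable def wFun (n : ℕ) (s : ℝ → ℝ) (m : (Fin n → ℝ) → (Fin n → ℝ)) :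
    (Fin n → ℝ) → Fin n → ℝ :=
  fun x i =>
    if h : (i : ℕ) + 1 < n then
      s (sortedDesc n x i - sortedDesc n x ⟨(i : ℕ) + 1, h⟩) * m x i
    else m x i

section Helpers

lemma sortsPerm_sort (n : ℕ) (x : Fin n → ℝ) :
    SortsPerm n (Tuple.sort (fun j => -x j)) x := by
  intro a b hab
  have h := Tuple.monotone_sort (fun j => -x j) hab
  simpa using h

lemma sortsPerm_apply {n : ℕ} {σ : Equiv.Perm (Fin n)} {v : Fin n → ℝ}
    (h : SortsPerm n σ v) (i : Fin n) : v (σ i) = sortedDesc n v i := by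
  have hm : Monotone ((fun j => -v j) ∘ σ) := by
    intro a b hab
    simpa using h hab
  have := Tuple.unique_monotone hm (Tuple.monotone_sort (fun j => -v j))
  have h2 := congrFun this i
  simp only [Function.comp_apply] at h2
  have : v (σ i) = v (Tuple.sort (fun j => -v j) i) := by linarith [neg_inj.mp h2]
  simpa [sortedDesc] using this

lemma sortedDesc_antitone (n : ℕ) (v : Fin n → ℝ) : Antitone (sortedDesc n v) := by
  intro a b hab
  have h := Tuple.monotone_sort (fun j => -v j) hab
  simpa [sortedDesc] using h

lemma sortedDesc_le_add {n : ℕ} (x z : Fin n → ℝ) (j : Fin n) {c : ℝ}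
    (hc : ∀ i, x i ≤ z i + c) : sortedDesc n x j ≤ sortedDesc n z j + c := by
  classical
  set σ := Tuple.sort (fun i => -x i) with hσ
  set τ := Tuple.sort (fun i => -z i) with hτ
  have hσx : SortsPerm n σ x := sortsPerm_sort n x
  have hτz : SortsPerm n τ z := sortsPerm_sort n z
  set A : Finset (Fin n) := (Finset.Iic j).image (fun u => τ.symm (σ u)) with hA
  have hcard : A.card = (j : ℕ) + 1 := by
    rw [hA, Finset.card_image_of_injective _ (fun a b hab => by
      exact σ.injective (τ.symm.injective hab)), Fin.card_Iic]
  have hex : ∃ i ∈ A, j ≤ i := by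
    by_contra hco
    push_neg at hco
    have hsub : A ⊆ Finset.Iio j := fun i hi => Finset.mem_Iio.mpr (hco i hi)
    have := Finset.card_le_card hsub
    rw [hcard, Fin.card_Iio] at this
    omega
  obtain ⟨i, hiA, hji⟩ := hex
  obtain ⟨u, huj, hui⟩ := Finset.mem_image.mp hiA
  have h1 : sortedDesc n z j ≥ z (τ i) := by
    have := hτz hji
    simpa [Function.comp, sortsPerm_apply hτz j] using (sortsPerm_apply hτz j ▸ this)
  have h2 : z (τ i) = z (σ u) := by rw [← hui]; simp
  have h3 : x (σ u) ≥ x (σ j) := hσx (Finset.mem_Iic.mp huj)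
  have h4 : x (σ j) = sortedDesc n x j := sortsPerm_apply hσx j
  have h5 : x (σ u) ≤ z (σ u) + c := hc _
  linarith

lemma sortedDesc_lipschitz (n : ℕ) (j : Fin n) :
    LipschitzWith 1 (fun x : Fin n → ℝ => sortedDesc n x j) := by
  apply LipschitzWith.of_dist_le_mul
  intro x z
  rw [NNReal.coe_one, one_mul, Real.dist_eq, abs_sub_le_iff]
  constructor
  · have := sortedDesc_le_add x z j (c := dist x z) (fun i => by
      have := dist_le_pi_dist x z i
      rw [Real.dist_eq] at this
      have := abs_sub_le_iff.mp (le_trans (le_refl _) this) |>.1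
      linarith)
    linarith
  · have := sortedDesc_le_add z x j (c := dist x z) (fun i => by
      have h := dist_le_pi_dist x z i
      rw [Real.dist_eq] at h
      have := abs_sub_le_iff.mp h |>.2
      linarith)
    rw [dist_comm] at this ⊢
    linarith

variable {α : Type*} [PseudoEMetricSpace α]

lemma ll_mul {f g : α → ℝ} (hf : LocallyLipschitz f) (hg : LocallyLipschitz g) :
    LocallyLipschitz (fun x => f x * g x) := by
  have h : LocallyLipschitz (fun p : ℝ × ℝ => p.1 * p.2) :=
    (contDiff_fst.mul contDiff_snd : ContDiff ℝ 1 _).locallyLipschitz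
  exact h.comp (hf.prodMk hg)

lemma ll_add {f g : α → ℝ} (hf : LocallyLipschitz f) (hg : LocallyLipschitz g) :
    LocallyLipschitz (fun x => f x + g x) := by
  have h : LocallyLipschitz (fun p : ℝ × ℝ => p.1 + p.2) :=
    (contDiff_fst.add contDiff_snd : ContDiff ℝ 1 _).locallyLipschitz
  exact h.comp (hf.prodMk hg)

lemma ll_sub {f g : α → ℝ} (hf : LocallyLipschitz f) (hg : LocallyLipschitz g) :
    LocallyLipschitz (fun x => f x - g x) := by
  have h : LocallyLipschitz (fun p : ℝ × ℝ => p.1 - p.2) :=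
    (contDiff_fst.sub contDiff_snd : ContDiff ℝ 1 _).locallyLipschitz
  exact h.comp (hf.prodMk hg)

lemma ll_sum {ι : Type*} (S : Finset ι) (f : ι → α → ℝ)
    (h : ∀ i ∈ S, LocallyLipschitz (f i)) :
    LocallyLipschitz (fun x => ∑ i ∈ S, f i x) := by
  classical
  induction S using Finset.induction_on with
  | empty => simpa using LocallyLipschitz.const (0 : ℝ)
  | insert a s hni ih =>
    simp only [Finset.sum_insert hni]
    exact ll_add (h a (Finset.mem_insert_self a s))
      (ih fun i hi => h i (Finset.mem_insert_of_mem hi))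

lemma ll_pi {ι : Type*} [Fintype ι] {f : α → ι → ℝ}
    (h : ∀ i, LocallyLipschitz (fun x => f x i)) : LocallyLipschitz f := by
  classical
  intro x
  choose K t ht hK using fun i => h i x
  refine ⟨Finset.univ.sup K, ⋂ i, t i, Filter.iInter_mem.mpr ht, ?_⟩
  intro a ha b hb
  simp only [Set.mem_iInter] at ha hb
  calc edist (f a) (f b) = Finset.univ.sup (fun i => edist (f a i) (f b i)) :=
        edist_pi_def _ _
    _ ≤ ↑(Finset.univ.sup K) * edist a b := by
        apply Finset.sup_le
        intro i _
        calc edist (f a i) (f b i) ≤ ↑(K i) * edist a b := hK i (ha i) (hb i)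
          _ ≤ ↑(Finset.univ.sup K) * edist a b := by
              gcongr
              exact_mod_cast ENNReal.coe_le_coe.mpr (Finset.le_sup (Finset.mem_univ i))

/-- Closed-form for `f x (σ i)` avoiding indicator functions. -/
lemma key_eq (n : ℕ) (s : ℝ → ℝ) (hs0 : s 0 = 0)
    (m : (Fin n → ℝ) → (Fin n → ℝ)) (x : Fin n → ℝ) (i : Fin n)
    (σ : Equiv.Perm (Fin n)) (hσ : SortsPerm n σ x) :
    (∑ j : Fin n, if h : (j : ℕ) + 1 < n then
        s (min (sortedDesc n x j) (x (σ i)) -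
          min (sortedDesc n x ⟨(j : ℕ) + 1, h⟩) (x (σ i))) * m x j
      else m x j)
    = ∑ j ∈ Finset.Ici i, wFun n s m x j := by
  classical
  have hyi : x (σ i) = sortedDesc n x i := sortsPerm_apply hσ i
  have hanti := sortedDesc_antitone n x
  rw [← Finset.sum_subset (Finset.subset_univ (Finset.Ici i))]
  · apply Finset.sum_congr rfl
    intro j hj
    have hij : i ≤ j := Finset.mem_Ici.mp hj
    by_cases h : (j : ℕ) + 1 < n
    · rw [dif_pos h, wFun, dif_pos h, hyi]
      have h1 : sortedDesc n x j ≤ sortedDesc n x i := hanti hij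
      have h2 : sortedDesc n x ⟨(j : ℕ) + 1, h⟩ ≤ sortedDesc n x i := by
        apply hanti
        exact le_trans hij (by simp [Fin.le_def])
      rw [min_eq_left h1, min_eq_left h2]
    · rw [dif_neg h, wFun, dif_neg h]
  · intro j _ hj
    have hji : j < i := by simpa using hj
    have h : (j : ℕ) + 1 < n := by
      have := Fin.lt_def.mp hji
      omega
    rw [dif_pos h, hyi]
    have h1 : sortedDesc n x i ≤ sortedDesc n x j := hanti hji.le
    have h2 : sortedDesc n x i ≤ sortedDesc n x ⟨(j : ℕ) + 1, h⟩ := by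
      apply hanti
      have := Fin.lt_def.mp hji
      simp [Fin.le_def]
      omega
    rw [min_eq_right h1, min_eq_right h2, sub_self, hs0, zero_mul]

end Helpers

theorem stmt_14 (n : ℕ) (hn : 1 ≤ n) (s : ℝ → ℝ)
    (hs : ContDiff ℝ 1 s) (hs0 : s 0 = 0) (hspos : ∀ a : ℝ, a ≠ 0 → 0 < s a)
    (m : (Fin n → ℝ) → (Fin n → ℝ)) (hm : ContDiff ℝ 1 m)
    (hmpos : ∀ (x : Fin n → ℝ) (i : Fin n), (i : ℕ) + 1 < n → 0 < m x i)
    (f : (Fin n → ℝ) → (Fin n → ℝ))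
    (hfdef : ∀ (x : Fin n → ℝ) (σ : Equiv.Perm (Fin n)), SortsPerm n σ x →
      ∀ i : Fin n, f x (σ i) = ∑ j ∈ Finset.Ici i, wFun n s m x j) :
    LocallyLipschitz f ∧
      ∀ (x d : Fin n → ℝ), ∃ L : Fin n → ℝ,
        Tendsto (fun t : ℝ => t⁻¹ • (f (x + t • d) - f x)) (𝓝[>] (0 : ℝ)) (𝓝 L) := by
  classical
  constructor
  · -- Locally Lipschitz
    have hF : f = fun x k => ∑ j : Fin n, if h : (j : ℕ) + 1 < n then
        s (min (sortedDesc n x j) (x k) -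
          min (sortedDesc n x ⟨(j : ℕ) + 1, h⟩) (x k)) * m x j
      else m x j := by
      funext x k
      set σ := Tuple.sort (fun j => -x j) with hσdef
      have hσ : SortsPerm n σ x := sortsPerm_sort n x
      have hk : σ (σ.symm k) = k := σ.apply_symm_apply k
      calc f x k = f x (σ (σ.symm k)) := by rw [hk]
        _ = ∑ j ∈ Finset.Ici (σ.symm k), wFun n s m x j := hfdef x σ hσ (σ.symm k)
        _ = _ := by rw [← key_eq n s hs0 m x (σ.symm k) σ hσ, hk]
    rw [hF]
    apply ll_pi
    intro k
    apply ll_sum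
    intro j _
    by_cases h : (j : ℕ) + 1 < n
    · simp only [dif_pos h]
      have hmj : LocallyLipschitz (fun x : Fin n → ℝ => m x j) :=
        ((contDiff_pi.mp hm) j).locallyLipschitz
      apply ll_mul _ hmj
      apply hs.locallyLipschitz.comp
      apply ll_sub
      · exact LocallyLipschitz.min (sortedDesc_lipschitz n j).locallyLipschitz
          (LipschitzWith.eval k).locallyLipschitz
      · exact LocallyLipschitz.min (sortedDesc_lipschitz n ⟨(j : ℕ) + 1, h⟩).locallyLipschitz
          (LipschitzWith.eval k).locallyLipschitz
    · simp only [dif_neg h]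
      exact ((contDiff_pi.mp hm) j).locallyLipschitz
  · -- Directional derivative
    intro x d
    -- sort lexicographically by (x, d)
    set key : Fin n → Lex (ℝ × ℝ) := fun j => toLex (-x j, -d j) with hkey
    set σ := Tuple.sort key with hσdef
    have hmono := Tuple.monotone_sort key
    have hpair : ∀ a b : Fin n, a ≤ b →
        x (σ a) > x (σ b) ∨ (x (σ a) = x (σ b) ∧ d (σ b) ≤ d (σ a)) := by
      intro a b hab
      have := hmono hab
      simp only [hkey, Function.comp_apply] at this
      rcases Prod.Lex.le_iff.mp this with h | ⟨h1, h2⟩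
      · left; simpa using h
      · right
        constructor
        · have : -x (σ a) = -x (σ b) := h1
          linarith
        · simpa using h2
    have hσx : SortsPerm n σ x := by
      intro a b hab
      rcases hpair a b hab with h | ⟨h, _⟩
      · exact h.le
      · exact h.ge
    -- eventually σ sorts x + t • d
    have hev : ∀ᶠ t in 𝓝[≥] (0 : ℝ), SortsPerm n σ (x + t • d) := by
      have hab : ∀ a b : Fin n, ∀ᶠ t in 𝓝[≥] (0 : ℝ),
          a ≤ b → (x + t • d) (σ b) ≤ (x + t • d) (σ a) := by
        intro a b
        by_cases hab : a ≤ b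
        · rcases hpair a b hab with h | ⟨h1, h2⟩
          · have hc : Tendsto (fun t : ℝ => (x + t • d) (σ a) - (x + t • d) (σ b))
                (𝓝 0) (𝓝 (x (σ a) - x (σ b))) := by
              have heq : (fun t : ℝ => (x + t • d) (σ a) - (x + t • d) (σ b)) =
                  fun t : ℝ => (x (σ a) - x (σ b)) + t * (d (σ a) - d (σ b)) := by
                funext t
                simp only [Pi.add_apply, Pi.smul_apply, smul_eq_mul]
                ring
              rw [heq]
              have hco : Continuous fun t : ℝ =>
                  (x (σ a) - x (σ b)) + t * (d (σ a) - d (σ b)) := by continuity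
              have := hco.tendsto 0
              simpa using this
            have hpos := hc.eventually (eventually_gt_nhds (sub_pos.mpr h))
            filter_upwards [hpos.filter_mono nhdsWithin_le_nhds] with t ht _
            linarith
          · filter_upwards [self_mem_nhdsWithin] with t ht _
            have ht0 : (0 : ℝ) ≤ t := ht
            simp only [Pi.add_apply, Pi.smul_apply, smul_eq_mul]
            nlinarith [mul_le_mul_of_nonneg_left h2 ht0]
        · filter_upwards with t h
          exact absurd h hab
      have := (Filter.eventually_all (ι := Fin n)).mpr
        (fun a => (Filter.eventually_all (ι := Fin n)).mpr (fun b => hab a b))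
      filter_upwards [this] with t ht
      intro a b h2
      exact ht a b h2
    -- the smooth surrogate g
    set W : Fin n → ℝ → ℝ := fun j t =>
      if h : (j : ℕ) + 1 < n then
        s ((x (σ j) - x (σ ⟨(j : ℕ) + 1, h⟩)) + t * (d (σ j) - d (σ ⟨(j : ℕ) + 1, h⟩)))
          * m (x + t • d) j
      else m (x + t • d) j with hW
    set g : ℝ → Fin n → ℝ := fun t k => ∑ j ∈ Finset.Ici (σ.symm k), W j t with hg
    have hfg : ∀ t : ℝ, SortsPerm n σ (x + t • d) → f (x + t • d) = g t := by
      intro t hσt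
      funext k
      have hk : σ (σ.symm k) = k := σ.apply_symm_apply k
      calc f (x + t • d) k = f (x + t • d) (σ (σ.symm k)) := by rw [hk]
        _ = ∑ j ∈ Finset.Ici (σ.symm k), wFun n s m (x + t • d) j :=
            hfdef _ σ hσt (σ.symm k)
        _ = g t k := by
            apply Finset.sum_congr rfl
            intro j _
            simp only [wFun, hW]
            by_cases h : (j : ℕ) + 1 < n
            · rw [dif_pos h, dif_pos h]
              congr 1
              have e1 := sortsPerm_apply hσt j
              have e2 := sortsPerm_apply hσt ⟨(j : ℕ) + 1, h⟩
              rw [← e1, ← e2]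
              simp only [Pi.add_apply, Pi.smul_apply, smul_eq_mul]
              ring_nf
            · rw [dif_neg h, dif_neg h]
    have hσx0 : SortsPerm n σ (x + (0 : ℝ) • d) := by
      simpa [zero_smul] using hσx
    have hfx0 : f x = g 0 := by
      have := hfg 0 hσx0
      simpa [zero_smul] using this
    -- differentiability of g at 0
    have hline : DifferentiableAt ℝ (fun t : ℝ => x + t • d) 0 := by
      apply DifferentiableAt.add
      · exact differentiableAt_const x
      · exact differentiableAt_id.smul_const d
    have hWd : ∀ j : Fin n, DifferentiableAt ℝ (W j) 0 := by
      intro j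
      have hmj : Differentiable ℝ (fun v : Fin n → ℝ => m v j) :=
        ((contDiff_pi.mp hm) j).differentiable one_ne_zero
      have hmjd : DifferentiableAt ℝ (fun t : ℝ => m (x + t • d) j) 0 :=
        (hmj _).comp 0 hline
      rw [hW]
      by_cases h : (j : ℕ) + 1 < n
      · simp only [dif_pos h]
        apply DifferentiableAt.mul _ hmjd
        apply DifferentiableAt.comp
        · exact (hs.differentiable one_ne_zero).differentiableAt
        · exact (differentiableAt_const _).add (differentiableAt_id.mul_const _)
      · simp only [dif_neg h]
        exact hmjd
    have hgd : DifferentiableAt ℝ g 0 := by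
      rw [hg]
      apply differentiableAt_pi.mpr
      intro k
      exact DifferentiableAt.fun_sum fun j _ => hWd j
    refine ⟨deriv g 0, ?_⟩
    have hslope := hasDerivAt_iff_tendsto_slope.mp hgd.hasDerivAt
    have hmono2 : 𝓝[>] (0 : ℝ) ≤ 𝓝[≠] (0 : ℝ) :=
      nhdsWithin_mono 0 (fun t ht => ne_of_gt ht)
    have htends : Tendsto (slope g 0) (𝓝[>] (0 : ℝ)) (𝓝 (deriv g 0)) :=
      hslope.mono_left hmono2
    apply htends.congr'
    have hev' : ∀ᶠ t in 𝓝[>] (0 : ℝ), SortsPerm n σ (x + t • d) :=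
      hev.filter_mono (nhdsWithin_mono 0 Set.Ioi_subset_Ici_self)
    filter_upwards [hev'] with t ht
    rw [slope_def_module, hfg t ht, hfx0]
    simp
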